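/- (Representer theorem, Theorem 1 / Appendix B.) Assume γ_k > 0 and γ_M ≥ 0, and let L be an arbitrary real N×N matrix. If f* ∈ H is a minimizer of the manifold-regularized objective, i.e. J(f*) ≤ J(f) for every f ∈ H, then f* lies in the linear span of {k₁, …, k_N}; equivalently, there exist real coefficients a₁, …, a_N with f* = Σ_{i=1}^N aᵢ·kᵢ. -/

import Mathlib

open RealInnerProductSpace

/-- Representer theorem (Theorem 1 / Appendix B): a minimizer of the
manifold-regularized objective lies in the span of the kernel sections. -/
theorem stmt_0 {H : Type*} [NormedAddCommGroup H] [InnerProductSpace ℝ H]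
    (N l : ℕ) (hl : 1 ≤ l) (hlN : l ≤ N)
    (k : Fin N → H) (p : Fin l → ℝ) (L : Matrix (Fin N) (Fin N) ℝ)
    (γk γM : ℝ) (hγk : 0 < γk) (hγM : 0 ≤ γM)
    (J : H → ℝ)
    (hJ : ∀ f : H, J f =
        (1 / (l : ℝ)) * ∑ i : Fin l, (p i - ⟪f, k (Fin.castLE hlN i)⟫) ^ 2
        + γk * ⟪f, f⟫
        + γM * ∑ i : Fin N, ∑ j : Fin N, L i j * ⟪f, k i⟫ * ⟪f, k j⟫)
    (fstar : H) (hmin : ∀ f : H, J fstar ≤ J f) :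
    ∃ a : Fin N → ℝ, fstar = ∑ i : Fin N, a i • k i := by
  set S := Submodule.span ℝ (Set.range k) with hS
  haveI : FiniteDimensional ℝ S :=
    FiniteDimensional.span_of_finite ℝ (Set.finite_range k)
  haveI : CompleteSpace S := FiniteDimensional.complete ℝ S
  set g : H := (S.orthogonalProjectionOnto fstar : H) with hg
  have hgS : g ∈ S := (S.orthogonalProjectionOnto fstar).2
  have hv : fstar - g ∈ Sᗮ := Submodule.sub_starProjection_mem_orthogonal fstar
  have hinner : ∀ x ∈ S, ⟪fstar, x⟫ = ⟪g, x⟫ := by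
    intro x hx
    have h0 : ⟪x, fstar - g⟫ = 0 := hv x hx
    rw [inner_sub_right] at h0
    have := real_inner_comm x fstar
    have := real_inner_comm x g
    linarith [real_inner_comm x fstar, real_inner_comm x g]
  have hik : ∀ i : Fin N, ⟪fstar, k i⟫ = ⟪g, k i⟫ := fun i =>
    hinner (k i) (Submodule.subset_span ⟨i, rfl⟩)
  have hle := hmin g
  rw [hJ fstar, hJ g] at hle
  simp only [hik] at hle
  have hff : γk * ⟪fstar, fstar⟫ ≤ γk * ⟪g, g⟫ := by linarith
  have hle2 : ⟪fstar, fstar⟫ ≤ ⟪g, g⟫ := le_of_mul_le_mul_left hff hγk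
  have hgv : ⟪g, fstar - g⟫ = 0 := by
    have := hv g hgS
    linarith [real_inner_comm g (fstar - g)]
  have hdecomp : ⟪fstar, fstar⟫ = ⟪g, g⟫ + ⟪fstar - g, fstar - g⟫ := by
    have h1 : ⟪fstar - g, g⟫ = 0 := by
      linarith [real_inner_comm g (fstar - g)]
    have : fstar = g + (fstar - g) := by abel
    conv_lhs => rw [this]
    rw [inner_add_left, inner_add_right, inner_add_right, hgv, h1]
    ring
  have hvv : ⟪fstar - g, fstar - g⟫ ≤ 0 := by linarith
  have hv0 : fstar - g = 0 := by
    have := real_inner_self_nonneg (x := fstar - g)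
    have h0 : ⟪fstar - g, fstar - g⟫ = 0 := le_antisymm hvv this
    exact inner_self_eq_zero.mp h0
  have hfs : fstar = g := by
    have := sub_eq_zero.mp hv0
    exact this
  have hfS : fstar ∈ S := hfs ▸ hgS
  obtain ⟨a, ha⟩ := (Submodule.mem_span_range_iff_exists_fun ℝ).mp hfS
  exact ⟨a, ha.symm⟩
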